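/- Let m and n be distinct positive integers with φ(m) = φ(n), and let t be a positive real number. Then Φ_m(t) - Φ_n(t) and Φ_m(1/t) - Φ_n(1/t) have the same sign: Φ_m(t) > Φ_n(t) if and only if Φ_m(1/t) > Φ_n(1/t). -/

import Mathlib

open Polynomial

lemma reverse_one' : (1 : ℝ[X]).reverse = 1 := by
  rw [← C_1, reverse_C]

lemma reverse_X_pow_sub_one (n : ℕ) (hn : 0 < n) :
    (X ^ n - 1 : ℝ[X]).reverse = 1 - X ^ n := by
  have h : (X ^ n - 1 : ℝ[X]) = X ^ n + C (-1) := by simp [sub_eq_add_neg]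
  have hX : (X ^ n : ℝ[X]).reverse = 1 := by
    have := reverse_X_pow_mul (1 : ℝ[X]) n
    rwa [mul_one, reverse_one'] at this
  rw [h, reverse_add_C, hX]
  simp [sub_eq_add_neg]

lemma reverse_prod (s : Finset ℕ) (f : ℕ → ℝ[X]) :
    (∏ d ∈ s, f d).reverse = ∏ d ∈ s, (f d).reverse := by
  classical
  induction s using Finset.induction_on with
  | empty => simpa using reverse_one'
  | insert _ _ h ih =>
      rw [Finset.prod_insert h, Finset.prod_insert h, reverse_mul_of_domain, ih]

lemma reverse_cyclotomic (n : ℕ) :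
    (cyclotomic n ℝ).reverse = if n = 1 then 1 - X else cyclotomic n ℝ := by
  induction n using Nat.strong_induction_on with
  | _ n ih =>
    match n with
    | 0 => simpa [cyclotomic_zero] using reverse_one'
    | 1 =>
      have hX : (X : ℝ[X]).reverse = 1 := by
        have := reverse_X_mul (1 : ℝ[X]); rwa [mul_one, reverse_one'] at this
      have h : (cyclotomic 1 ℝ) = X + C (-1) := by simp [cyclotomic_one, sub_eq_add_neg]
      rw [if_pos rfl, h, reverse_add_C, hX, natDegree_X]
      simp [sub_eq_add_neg]
    | (k+2) =>
      set n := k + 2 with hn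
      have hn0 : 0 < n := by omega
      have hprod := prod_cyclotomic_eq_X_pow_sub_one hn0 ℝ
      have h1 : (1 : ℕ) ∈ n.properDivisors :=
        Nat.one_mem_properDivisors_iff_one_lt.mpr (by omega)
      have hdiv : n.divisors = insert n n.properDivisors :=
        (Nat.insert_self_properDivisors (by omega)).symm
      have hnotmem : n ∉ n.properDivisors := Nat.self_notMem_properDivisors
      -- reverse of both sides of hprod
      have hrev : (∏ d ∈ n.divisors, cyclotomic d ℝ).reverse = 1 - X ^ n := by
        rw [hprod, reverse_X_pow_sub_one n hn0]
      rw [reverse_prod] at hrev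
      have hproper : ∀ d ∈ n.properDivisors,
          (cyclotomic d ℝ).reverse = if d = 1 then 1 - X else cyclotomic d ℝ := by
        intro d hd
        exact ih d (Nat.mem_properDivisors.mp hd).2
      rw [hdiv, Finset.prod_insert hnotmem] at hrev hprod
      rw [Finset.prod_congr rfl hproper] at hrev
      -- pull out the d = 1 factor
      have hsplit : (∏ d ∈ n.properDivisors, if d = 1 then (1 - X : ℝ[X]) else cyclotomic d ℝ)
          = - ∏ d ∈ n.properDivisors, cyclotomic d ℝ := by
        rw [← Finset.prod_erase_mul _ _ h1, ← Finset.prod_erase_mul _ _ h1]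
        have : (∏ d ∈ n.properDivisors.erase 1, if d = 1 then (1 - X : ℝ[X]) else cyclotomic d ℝ)
            = ∏ d ∈ n.properDivisors.erase 1, cyclotomic d ℝ := by
          refine Finset.prod_congr rfl fun d hd => ?_
          rw [if_neg (Finset.ne_of_mem_erase hd)]
        rw [this, if_pos rfl, cyclotomic_one]
        ring
      rw [hsplit] at hrev
      have hne : (∏ d ∈ n.properDivisors, cyclotomic d ℝ) ≠ 0 :=
        Finset.prod_ne_zero_iff.mpr fun d _ => cyclotomic_ne_zero d ℝ
      have : (cyclotomic n ℝ).reverse * (∏ d ∈ n.properDivisors, cyclotomic d ℝ)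
          = cyclotomic n ℝ * (∏ d ∈ n.properDivisors, cyclotomic d ℝ) := by
        have h2 : (1 : ℝ[X]) - X ^ n = -(X ^ n - 1) := by ring
        rw [← neg_neg ((cyclotomic n ℝ).reverse * _), ← mul_neg, hrev, h2, neg_neg, hprod]
      have := mul_right_cancel₀ hne this
      rw [this, if_neg (by omega)]

/-- self reciprocal identity: for `n ≥ 2` and `t ≠ 0`,
`Φ_n(t⁻¹) * t ^ φ(n) = Φ_n(t)`. -/
lemma cyclotomic_eval_inv_mul (n : ℕ) (hn : 2 ≤ n) (t : ℝ) (ht : t ≠ 0) :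
    (cyclotomic n ℝ).eval t⁻¹ * t ^ n.totient = (cyclotomic n ℝ).eval t := by
  have : Invertible t := invertibleOfNonzero ht
  have h := eval₂_reverse_mul_pow (RingHom.id ℝ) t (cyclotomic n ℝ)
  rw [reverse_cyclotomic, if_neg (by omega), natDegree_cyclotomic] at h
  simp only [invOf_eq_inv t] at h
  rw [eval, eval]
  simpa using h

/-- Let `m ≠ n` be positive integers with `φ(m) = φ(n)`, and let `t > 0` be real.
Then `Φ_m(t) > Φ_n(t)` if and only if `Φ_m(1/t) > Φ_n(1/t)`. -/
theorem cyclotomic_sub_sign_inv (m n : ℕ) (hm : 0 < m) (hn : 0 < n)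
    (hmn : m ≠ n) (hphi : m.totient = n.totient) (t : ℝ) (ht : 0 < t) :
    (Polynomial.cyclotomic n ℝ).eval t < (Polynomial.cyclotomic m ℝ).eval t ↔
      (Polynomial.cyclotomic n ℝ).eval t⁻¹ < (Polynomial.cyclotomic m ℝ).eval t⁻¹ := by
  rcases eq_or_lt_of_le (Nat.succ_le_of_lt hm) with h1m | h2m
  · -- m = 1, hence n = 2
    have hm1 : m = 1 := h1m.symm
    have : n.totient = 1 := by rw [← hphi, hm1]; simp
    have hn2 : n = 2 := by
      rcases Nat.totient_eq_one_iff.mp this with h | h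
      · exact absurd (hm1.trans h.symm) hmn
      · exact h
    subst hm1 hn2
    simp only [cyclotomic_one, cyclotomic_two, eval_add, eval_sub, eval_one, eval_X]
    constructor <;> intro h <;> linarith
  · rcases eq_or_lt_of_le (Nat.succ_le_of_lt hn) with h1n | h2n
    · have hn1 : n = 1 := h1n.symm
      have : m.totient = 1 := by rw [hphi, ← hn1]; simp [hn1]
      have hm2 : m = 2 := by
        rcases Nat.totient_eq_one_iff.mp this with h | h
        · exact absurd (h.trans hn1.symm) hmn
        · exact h
      subst hn1 hm2
      simp only [cyclotomic_one, cyclotomic_two, eval_add, eval_sub, eval_one, eval_X]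
      constructor <;> intro h <;> linarith
    · -- both ≥ 2
      have hm' := cyclotomic_eval_inv_mul m h2m t ht.ne'
      have hn' := cyclotomic_eval_inv_mul n h2n t ht.ne'
      rw [hphi] at hm'
      have hpow : 0 < t ^ n.totient := pow_pos ht _
      rw [← hm', ← hn']
      exact mul_lt_mul_iff_of_pos_right hpow
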